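/- In the Heyting algebra L_QM (with relative pseudo-complement S₁ → S₂ = ⋁{S ∈ L_QM : S ∧ S₁ ≤ S₂} and negation ¬S := S → ⊥), the law of excluded middle S ∨ ¬S = ⊤ holds if and only if S = ⊤ or ¬S = ⊤ (equivalently S = ⊥). -/

import Mathlib

open scoped ENNReal

variable (H : Type*) [NormedAddCommGroup H] [InnerProductSpace ℂ H] [CompleteSpace H]

/-- An orthogonal projection on the Hilbert space `H`, i.e. an element of `L(ℋ)`. -/
def IsProj (P : H →L[ℂ] H) : Prop := IsIdempotentElem P ∧ IsSelfAdjoint P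

/-- The lattice order on projections: `P ≤ Q` iff `P * Q = P`. -/
def pleq (P Q : H →L[ℂ] H) : Prop := P * Q = P

/-- An abelian (commutative) von Neumann algebra. -/
def IsAbelianAlg (A : VonNeumannAlgebra H) : Prop :=
  ∀ x ∈ A, ∀ y ∈ A, x * y = y * x
/-- The collection `𝔄` of abelian von Neumann subalgebras of `B(H)`. -/
def AbAlg := {A : VonNeumannAlgebra H // IsAbelianAlg H A}
/-- The lattice `L_QM`: monotone functions `S : 𝔄 → L(ℋ)` with `S(𝒜) ∈ L(𝒜)`. -/
structure LQM where
  S : AbAlg H → (H →L[ℂ] H)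
  isProj : ∀ A : AbAlg H, IsProj H (S A)
  mem : ∀ A : AbAlg H, S A ∈ A.1
  mono : ∀ A B : AbAlg H, A.1 ≤ B.1 → pleq H (S A) (S B)

/-- `L_QM` carries the pointwise partial order. -/
instance : PartialOrder (LQM H) where
  le S₁ S₂ := ∀ A : AbAlg H, pleq H (S₁.S A) (S₂.S A)
  le_refl S A := (S.isProj A).1
  le_trans S₁ S₂ S₃ h12 h23 A := by
    show S₁.S A * S₃.S A = S₁.S A
    calc S₁.S A * S₃.S A = S₁.S A * S₂.S A * S₃.S A := by rw [h12 A]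
      _ = S₁.S A * (S₂.S A * S₃.S A) := mul_assoc _ _ _
      _ = S₁.S A := by rw [h23 A, h12 A]
  le_antisymm S₁ S₂ h12 h21 := by
    have hS : S₁.S = S₂.S := funext fun A => by
      have hc : S₁.S A * S₂.S A = S₂.S A * S₁.S A :=
        A.2 _ (S₁.mem A) _ (S₂.mem A)
      calc S₁.S A = S₁.S A * S₂.S A := (h12 A).symm
        _ = S₂.S A * S₁.S A := hc
        _ = S₂.S A := h21 A
    cases S₁; cases S₂; cases hS; rfl

theorem LQM.le_def (S₁ S₂ : LQM H) :
    S₁ ≤ S₂ ↔ ∀ A : AbAlg H, pleq H (S₁.S A) (S₂.S A) := Iff.rfl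
/-- The top element of `L_QM`: the constant function `𝒜 ↦ 1`. -/
def LQMtop : LQM H where
  S _ := 1
  isProj _ := ⟨by simp [IsIdempotentElem], by simp [IsSelfAdjoint]⟩
  mem A := one_mem A.1
  mono _ _ _ := one_mul 1
/-- The bottom element of `L_QM`: the constant function `𝒜 ↦ 0`. -/
def LQMbot : LQM H where
  S _ := 0
  isProj _ := ⟨by simp [IsIdempotentElem], by simp [IsSelfAdjoint]⟩
  mem A := zero_mem A.1
  mono _ _ _ := zero_mul 0

-- ==================== auxiliary development ====================
namespace LQMaux

variable {H}

local notation "⟪" x ", " y "⟫" => @inner ℂ _ _ x y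

/-! ### basic order lemmas -/

lemma lqm_le_top (S : LQM H) : S ≤ LQMtop H := fun _ => mul_one _
lemma lqm_bot_le (S : LQM H) : LQMbot H ≤ S := fun _ => zero_mul _

lemma lqm_ext {S T : LQM H} (h : ∀ A, S.S A = T.S A) : S = T := by
  cases S; cases T
  simp only [LQM.mk.injEq]
  exact funext h

lemma top_le_iff {S : LQM H} : LQMtop H ≤ S ↔ ∀ A, S.S A = 1 := by
  constructor
  · intro h A
    have := h A
    simpa [pleq, LQMtop] using this
  · intro h A
    show (1 : H →L[ℂ] H) * S.S A = 1
    rw [h A, one_mul]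

lemma eq_top_iff' {S : LQM H} : S = LQMtop H ↔ ∀ A, S.S A = 1 :=
  ⟨fun h A => by rw [h]; rfl, fun h => lqm_ext h⟩

lemma eq_bot_iff' {S : LQM H} : S = LQMbot H ↔ ∀ A, S.S A = 0 :=
  ⟨fun h A => by rw [h]; rfl, fun h => lqm_ext h⟩

lemma le_bot_iff' {S : LQM H} : S ≤ LQMbot H ↔ ∀ A, S.S A = 0 := by
  constructor
  · intro h A
    have := h A
    show S.S A = 0
    simpa [pleq, LQMbot] using this.symm
  · intro h A
    show S.S A * 0 = S.S A
    rw [h A, mul_zero]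

/-! ### pointwise meet -/

def lqmMeet (T S : LQM H) : LQM H where
  S A := T.S A * S.S A
  isProj A := by
    have hc : T.S A * S.S A = S.S A * T.S A := A.2 _ (T.mem A) _ (S.mem A)
    refine ⟨IsIdempotentElem.mul_of_commute hc (T.isProj A).1 (S.isProj A).1, ?_⟩
    show star (T.S A * S.S A) = T.S A * S.S A
    rw [star_mul, (T.isProj A).2.star_eq, (S.isProj A).2.star_eq, ← hc]
  mem A := mul_mem (T.mem A) (S.mem A)
  mono A B hAB := by
    have h1 : S.S A * T.S B = T.S B * S.S A :=
      B.2 _ (hAB (S.mem A)) _ (T.mem B)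
    have ht : T.S A * T.S B = T.S A := T.mono A B hAB
    have hs : S.S A * S.S B = S.S A := S.mono A B hAB
    show (T.S A * S.S A) * (T.S B * S.S B) = T.S A * S.S A
    calc (T.S A * S.S A) * (T.S B * S.S B)
        = ((T.S A * S.S A) * T.S B) * S.S B := (mul_assoc _ _ _).symm
      _ = (T.S A * (S.S A * T.S B)) * S.S B := by rw [mul_assoc (T.S A)]
      _ = (T.S A * (T.S B * S.S A)) * S.S B := by rw [h1]
      _ = ((T.S A * T.S B) * S.S A) * S.S B := by rw [← mul_assoc (T.S A)]
      _ = (T.S A * S.S A) * S.S B := by rw [ht]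
      _ = T.S A * (S.S A * S.S B) := by rw [mul_assoc]
      _ = T.S A * S.S A := by rw [hs]

lemma isGLB_lqmMeet (T S : LQM H) : IsGLB {T, S} (lqmMeet T S) := by
  constructor
  · intro x hx
    rcases hx with rfl | hx
    · intro A
      have hc : x.S A * S.S A = S.S A * x.S A := A.2 _ (x.mem A) _ (S.mem A)
      show (x.S A * S.S A) * x.S A = x.S A * S.S A
      rw [mul_assoc, ← hc, ← mul_assoc, (x.isProj A).1]
    · rcases hx with rfl
      intro A
      show (T.S A * x.S A) * x.S A = T.S A * x.S A
      rw [mul_assoc, (x.isProj A).1]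
  · intro x hx
    have h1 : x ≤ T := hx (by simp)
    have h2 : x ≤ S := hx (by simp)
    intro A
    have h1' : x.S A * T.S A = x.S A := h1 A
    have h2' : x.S A * S.S A = x.S A := h2 A
    show x.S A * (T.S A * S.S A) = x.S A
    rw [← mul_assoc, h1', h2']

lemma mem_negset_iff (S T : LQM H) :
    (∀ m : LQM H, IsGLB {T, S} m → m ≤ LQMbot H) ↔ ∀ A, T.S A * S.S A = 0 := by
  constructor
  · intro h A
    have := le_bot_iff'.mp (h (lqmMeet T S) (isGLB_lqmMeet T S)) A
    exact this
  · intro h m hm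
    have hme : m = lqmMeet T S := hm.unique (isGLB_lqmMeet T S)
    subst hme
    exact le_bot_iff'.mpr h

/-! ### pointwise join of two elements -/

lemma one_sub_mul_one_sub_left {R : Type*} [Ring R] {a b : R} (h : a * b = a) :
    (1 - a) * (1 - b) = 1 - b := by
  have e : (1 - a) * (1 - b) = 1 - a - b + a * b := by noncomm_ring
  rw [e, h]; abel

lemma one_sub_mul_one_sub_right {R : Type*} [Ring R] {a b : R} (h : a * b = b) :
    (1 - a) * (1 - b) = 1 - a := by
  have e : (1 - a) * (1 - b) = 1 - a - b + a * b := by noncomm_ring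
  rw [e, h]; abel

def lqmJoin (S N : LQM H) : LQM H where
  S A := 1 - (1 - S.S A) * (1 - N.S A)
  isProj A := by
    have hc : Commute (S.S A) (N.S A) := A.2 _ (S.mem A) _ (N.mem A)
    have hc1 : Commute (1 - S.S A) (1 - N.S A) :=
      ((Commute.one_right (1 - S.S A)).sub_right ((Commute.one_left (N.S A)).sub_left hc))
    refine ⟨(((S.isProj A).1.one_sub.mul_of_commute hc1 (N.isProj A).1.one_sub)).one_sub, ?_⟩
    show star (1 - (1 - S.S A) * (1 - N.S A)) = 1 - (1 - S.S A) * (1 - N.S A)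
    rw [star_sub, star_one, star_mul, star_sub, star_one, star_sub, star_one,
      (S.isProj A).2.star_eq, (N.isProj A).2.star_eq]
    rw [hc1.symm.eq]
  mem A := sub_mem (one_mem _)
    (mul_mem (sub_mem (one_mem _) (S.mem A)) (sub_mem (one_mem _) (N.mem A)))
  mono A B hAB := by
    have hp : S.S A * S.S B = S.S A := S.mono A B hAB
    have hq : N.S A * N.S B = N.S A := N.mono A B hAB
    have hc : Commute (N.S A) (S.S B) := B.2 _ (hAB (N.mem A)) _ (S.mem B)
    have hc1 : Commute (1 - N.S A) (1 - S.S B) :=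
      ((Commute.one_right (1 - N.S A)).sub_right ((Commute.one_left (S.S B)).sub_left hc))
    have hr : ((1 - S.S A) * (1 - N.S A)) * ((1 - S.S B) * (1 - N.S B))
        = (1 - S.S B) * (1 - N.S B) := by
      calc ((1 - S.S A) * (1 - N.S A)) * ((1 - S.S B) * (1 - N.S B))
          = (1 - S.S A) * ((1 - N.S A) * (1 - S.S B)) * (1 - N.S B) := by
            noncomm_ring
        _ = (1 - S.S A) * ((1 - S.S B) * (1 - N.S A)) * (1 - N.S B) := by rw [hc1.eq]
        _ = ((1 - S.S A) * (1 - S.S B)) * ((1 - N.S A) * (1 - N.S B)) := by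
            noncomm_ring
        _ = (1 - S.S B) * (1 - N.S B) := by
            rw [one_sub_mul_one_sub_left hp, one_sub_mul_one_sub_left hq]
    show (1 - (1 - S.S A) * (1 - N.S A)) * (1 - (1 - S.S B) * (1 - N.S B))
        = 1 - (1 - S.S A) * (1 - N.S A)
    exact one_sub_mul_one_sub_right hr

lemma lqmJoin_mem_upperBounds (S N : LQM H) : lqmJoin S N ∈ upperBounds {S, N} := by
  intro x hx
  rcases hx with rfl | hx
  · intro A
    have h0 : x.S A * (1 - x.S A) = 0 := by
      rw [mul_sub, mul_one, (x.isProj A).1, sub_self]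
    show x.S A * (1 - (1 - x.S A) * (1 - N.S A)) = x.S A
    rw [mul_sub, mul_one, ← mul_assoc, h0, zero_mul, sub_zero]
  · rcases hx with rfl
    intro A
    have hc : Commute (x.S A) (1 - S.S A) :=
      ((Commute.one_right (x.S A)).sub_right (A.2 _ (x.mem A) _ (S.mem A)))
    have h0 : x.S A * (1 - x.S A) = 0 := by
      rw [mul_sub, mul_one, (x.isProj A).1, sub_self]
    show x.S A * (1 - (1 - S.S A) * (1 - x.S A)) = x.S A
    rw [mul_sub, mul_one, ← mul_assoc, hc.eq, mul_assoc, h0, mul_zero, sub_zero]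

/-! ### the trivial (central) subalgebra -/

noncomputable def centerAlg : VonNeumannAlgebra H where
  toStarSubalgebra := StarSubalgebra.centralizer ℂ Set.univ
  centralizer_centralizer' := by
    show Set.centralizer (Set.centralizer
      (Set.centralizer (Set.univ ∪ star Set.univ))) = _
    rw [Set.centralizer_centralizer_centralizer]
    rfl

lemma mem_centerAlg_iff {z : H →L[ℂ] H} :
    z ∈ centerAlg (H := H) ↔ ∀ g : H →L[ℂ] H, g * z = z * g := by
  show z ∈ StarSubalgebra.centralizer ℂ Set.univ ↔ _
  rw [StarSubalgebra.mem_centralizer_iff]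
  constructor
  · intro h g
    exact (h g (Set.mem_univ g)).1
  · intro h g _
    exact ⟨h g, h (star g)⟩

noncomputable def A0 : AbAlg H :=
  ⟨centerAlg, fun x hx y hy => mem_centerAlg_iff.mp hy x⟩

lemma A0_le (A : AbAlg H) : (A0 (H := H)).1 ≤ A.1 := by
  intro x hx
  have hx' : ∀ g : H →L[ℂ] H, g * x = x * g := mem_centerAlg_iff.mp hx
  have : x ∈ Set.centralizer (Set.centralizer ((A.1 : Set (H →L[ℂ] H)))) :=
    fun u _ => hx' u
  rw [A.1.centralizer_centralizer] at this
  exact this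

lemma central_proj_eq_zero_or_one {p : H →L[ℂ] H}
    (hp : ∀ g : H →L[ℂ] H, g * p = p * g) (hidem : p * p = p) :
    p = 0 ∨ p = 1 := by
  by_cases hH : ∀ x : H, x = 0
  · left
    ext x
    rw [hH x]
    simp
  · push_neg at hH
    obtain ⟨e, he⟩ := hH
    have hne : (⟪e, e⟫ : ℂ) ≠ 0 := inner_self_ne_zero.mpr he
    have key : ∀ v : H, (⟪e, e⟫ : ℂ) • p v = (⟪e, p e⟫ : ℂ) • v := by
      intro v
      have hc := hp ((innerSL ℂ e).smulRight v)
      have h2 := congrArg (fun f : H →L[ℂ] H => f e) hc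
      simpa [ContinuousLinearMap.mul_apply, ContinuousLinearMap.smulRight_apply,
        innerSL_apply_apply, map_smul] using h2.symm
    set c : ℂ := (⟪e, e⟫ : ℂ)⁻¹ * (⟪e, p e⟫ : ℂ) with hcdef
    have hpv : ∀ v : H, p v = c • v := by
      intro v
      have h := key v
      have := congrArg (fun w => ((⟪e, e⟫ : ℂ)⁻¹ : ℂ) • w) h
      simp only [smul_smul, inv_mul_cancel₀ hne, one_smul] at this
      exact this
    have hc2 : c * c = c := by
      have h1 : p (p e) = p e := by
        have := congrArg (fun f : H →L[ℂ] H => f e) hidem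
        simpa [ContinuousLinearMap.mul_apply] using this
      rw [hpv e, map_smul, hpv e, smul_smul] at h1
      have h2 : (c * c - c) • e = 0 := by rw [sub_smul, h1, sub_self]
      rcases smul_eq_zero.mp h2 with h | h
      · exact sub_eq_zero.mp h
      · exact absurd h he
    have : c * (c - 1) = 0 := by rw [mul_sub, mul_one, hc2, sub_self]
    rcases mul_eq_zero.mp this with h | h
    · left
      ext v
      rw [hpv v, h]
      simp
    · right
      ext v
      rw [hpv v, sub_eq_zero.mp h]
      simp

/-! ### projections onto closed subspaces -/

noncomputable def Kproj (K : Submodule ℂ H) [CompleteSpace K] : H →L[ℂ] H :=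
  K.subtypeL ∘L K.orthogonalProjectionOnto

lemma Kproj_apply (K : Submodule ℂ H) [CompleteSpace K] (x : H) :
    Kproj K x = (K.orthogonalProjectionOnto x : H) := rfl

lemma Kproj_apply_mem (K : Submodule ℂ H) [CompleteSpace K] (x : H) :
    Kproj K x ∈ K := (K.orthogonalProjectionOnto x).2

lemma Kproj_eq_self (K : Submodule ℂ H) [CompleteSpace K] {x : H} (hx : x ∈ K) :
    Kproj K x = x := (Submodule.starProjection_eq_self_iff (K := K)).mpr hx

lemma Kproj_eq_zero (K : Submodule ℂ H) [CompleteSpace K] {x : H} (hx : x ∈ Kᗮ) :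
    Kproj K x = 0 := by
  rw [Kproj_apply, Submodule.orthogonalProjectionOnto_apply_of_mem_orthogonal hx,
    Submodule.coe_zero]

lemma Kproj_isProj (K : Submodule ℂ H) [CompleteSpace K] : IsProj H (Kproj K) := by
  refine ⟨?_, isSelfAdjoint_starProjection K⟩
  ext x
  exact Kproj_eq_self K (Kproj_apply_mem K x)

lemma Kproj_comp_of_le {K L : Submodule ℂ H} [CompleteSpace K] [CompleteSpace L]
    (h : K ≤ L) : Kproj L * Kproj K = Kproj K := by
  ext x
  exact Kproj_eq_self L (h (Kproj_apply_mem K x))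

lemma Kproj_pleq_of_le {K L : Submodule ℂ H} [CompleteSpace K] [CompleteSpace L]
    (h : K ≤ L) : Kproj K * Kproj L = Kproj K := by
  have h1 := congrArg star (Kproj_comp_of_le h)
  rwa [star_mul, (Kproj_isProj L).2.star_eq, (Kproj_isProj K).2.star_eq] at h1

lemma Kproj_comm {K : Submodule ℂ H} [CompleteSpace K] {u : H →L[ℂ] H}
    (hu : ∀ x ∈ K, u x ∈ K) (hu' : ∀ x ∈ K, (star u) x ∈ K) :
    u * Kproj K = Kproj K * u := by
  ext x
  have h1 : u (Kproj K x) ∈ K := hu _ (Kproj_apply_mem K x)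
  have h2 : x - Kproj K x ∈ Kᗮ := Submodule.sub_starProjection_mem_orthogonal (K := K) x
  have h3 : u (x - Kproj K x) ∈ Kᗮ := by
    rw [Submodule.mem_orthogonal]
    intro k hk
    have e1 : (⟪k, u (x - Kproj K x)⟫ : ℂ)
        = ⟪(ContinuousLinearMap.adjoint u) k, x - Kproj K x⟫ :=
      (ContinuousLinearMap.adjoint_inner_left u (x - Kproj K x) k).symm
    rw [e1]
    have hmem : (ContinuousLinearMap.adjoint u) k ∈ K := by
      have := hu' k hk
      rwa [ContinuousLinearMap.star_eq_adjoint] at this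
    exact (Submodule.mem_orthogonal K _).mp h2 _ hmem
  have hx : u x = u (Kproj K x) + u (x - Kproj K x) := by
    rw [← map_add, add_sub_cancel]
  show u (Kproj K x) = Kproj K (u x)
  rw [hx, map_add, Kproj_eq_self K h1, Kproj_eq_zero K h3, add_zero]

/-! ### the canonical upper bound of the `¬S` set -/

def negSet (S : LQM H) : Set (LQM H) := {T | ∀ A, T.S A * S.S A = 0}

def negSpace (S : LQM H) (A : AbAlg H) : Submodule ℂ H :=
  (Submodule.span ℂ (⋃ T ∈ negSet S, Set.range ⇑(T.S A))).topologicalClosure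

instance (S : LQM H) (A : AbAlg H) : CompleteSpace (negSpace S A) :=
  (Submodule.isClosed_topologicalClosure _).completeSpace_coe

lemma range_subset_negSpace {S T : LQM H} (hT : T ∈ negSet S) (A : AbAlg H) :
    Set.range ⇑(T.S A) ⊆ negSpace S A := by
  intro y hy
  apply Submodule.le_topologicalClosure
  apply Submodule.subset_span
  exact Set.mem_biUnion hT hy

lemma negSpace_maps {S : LQM H} {A : AbAlg H} {u : H →L[ℂ] H}
    (hu : ∀ m ∈ (A.1 : Set (H →L[ℂ] H)), m * u = u * m) :
    ∀ x ∈ negSpace S A, u x ∈ negSpace S A := by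
  have hspan : Submodule.span ℂ (⋃ T ∈ negSet S, Set.range ⇑(T.S A))
      ≤ (negSpace S A).comap (u : H →ₗ[ℂ] H) := by
    rw [Submodule.span_le]
    intro y hy
    rw [Set.mem_iUnion₂] at hy
    obtain ⟨T, hT, x, rfl⟩ := hy
    have hcomm : T.S A * u = u * T.S A := hu _ (T.mem A)
    have : u (T.S A x) = T.S A (u x) := by
      have := congrArg (fun f : H →L[ℂ] H => f x) hcomm
      simpa [ContinuousLinearMap.mul_apply] using this.symm
    show u (T.S A x) ∈ negSpace S A
    rw [this]
    exact range_subset_negSpace hT A ⟨u x, rfl⟩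
  have hclosed : IsClosed (((negSpace S A).comap (u : H →ₗ[ℂ] H) : Submodule ℂ H) : Set H) :=
    (Submodule.isClosed_topologicalClosure _).preimage u.continuous
  intro x hx
  exact Submodule.topologicalClosure_minimal _ hspan hclosed hx

lemma negSpace_mono (S : LQM H) {A B : AbAlg H} (hAB : A.1 ≤ B.1) :
    negSpace S A ≤ negSpace S B := by
  apply Submodule.topologicalClosure_minimal
  · rw [Submodule.span_le]
    intro y hy
    rw [Set.mem_iUnion₂] at hy
    obtain ⟨T, hT, x, rfl⟩ := hy
    have ht : T.S A * T.S B = T.S A := T.mono A B hAB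
    have hc : T.S A * T.S B = T.S B * T.S A := B.2 _ (hAB (T.mem A)) _ (T.mem B)
    have : T.S A x = T.S B (T.S A x) := by
      have h := congrArg (fun f : H →L[ℂ] H => f x) (ht.symm.trans hc)
      simpa [ContinuousLinearMap.mul_apply] using h
    rw [this]
    exact range_subset_negSpace hT B ⟨T.S A x, rfl⟩
  · exact Submodule.isClosed_topologicalClosure _

noncomputable def negUB (S : LQM H) : LQM H where
  S A := Kproj (negSpace S A)
  isProj A := Kproj_isProj _
  mem A := by
    have hcen : Kproj (negSpace S A)
        ∈ Set.centralizer (Set.centralizer ((A.1 : Set (H →L[ℂ] H)))) := by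
      intro u hu
      have hu' : ∀ m ∈ (A.1 : Set (H →L[ℂ] H)), m * star u = star u * m := by
        intro m hm
        have h1 := hu (star m) (star_mem hm)
        have h2 := congrArg star h1
        rw [star_mul, star_mul, star_star] at h2
        exact h2.symm
      exact Kproj_comm (negSpace_maps hu) (negSpace_maps hu')
    rw [A.1.centralizer_centralizer] at hcen
    exact hcen
  mono A B hAB := Kproj_pleq_of_le (negSpace_mono S hAB)

lemma negUB_mem_upperBounds (S : LQM H) : negUB S ∈ upperBounds (negSet S) := by
  intro T hT A
  have h1 : Kproj (negSpace S A) * T.S A = T.S A := by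
    ext x
    exact Kproj_eq_self _ (range_subset_negSpace hT A ⟨x, rfl⟩)
  have h2 := congrArg star h1
  rwa [star_mul, (Kproj_isProj (negSpace S A)).2.star_eq, (T.isProj A).2.star_eq] at h2

lemma negUB_ne_top {S : LQM H} {A : AbAlg H} (hA : S.S A ≠ 0) :
    (negUB S).S A ≠ 1 := by
  intro htop
  obtain ⟨w, hw⟩ : ∃ w, S.S A w ≠ 0 := by
    by_contra h
    push_neg at h
    exact hA (ContinuousLinearMap.ext fun x => by simpa using h x)
  set v := S.S A w with hv
  have hvK : v ∈ negSpace S A := by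
    have : Kproj (negSpace S A) v = v := by rw [show Kproj (negSpace S A) = (negUB S).S A from rfl, htop]; rfl
    rw [← this]
    exact Kproj_apply_mem _ v
  have hvOrth : ∀ k ∈ negSpace S A, (⟪v, k⟫ : ℂ) = 0 := by
    have hle : negSpace S A ≤ (ℂ ∙ v)ᗮ := by
      apply Submodule.topologicalClosure_minimal
      · rw [Submodule.span_le]
        intro y hy
        rw [Set.mem_iUnion₂] at hy
        obtain ⟨T, hT, x, rfl⟩ := hy
        rw [SetLike.mem_coe, Submodule.mem_orthogonal]
        intro z hz
        obtain ⟨c, rfl⟩ := Submodule.mem_span_singleton.mp hz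
        have hTv : T.S A v = 0 := by
          have := congrArg (fun f : H →L[ℂ] H => f w) (hT A)
          simpa [ContinuousLinearMap.mul_apply, hv] using this
        have hsa : (⟪v, T.S A x⟫ : ℂ) = ⟪T.S A v, x⟫ := by
          rw [← (T.isProj A).2.star_eq, ContinuousLinearMap.star_eq_adjoint,
            ContinuousLinearMap.adjoint_inner_left]
          rw [← ContinuousLinearMap.star_eq_adjoint, (T.isProj A).2.star_eq]
        rw [inner_smul_left, hsa, hTv]
        simp
      · exact Submodule.isClosed_orthogonal _
    intro k hk
    have := hle hk
    rw [Submodule.mem_orthogonal] at this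
    exact this v (Submodule.mem_span_singleton_self v)
  have : (⟪v, v⟫ : ℂ) = 0 := hvOrth v hvK
  exact hw (inner_self_eq_zero.mp this)

end LQMaux


/-- In the Heyting algebra `L_QM` (with `¬S` the join of all `T` whose
meet with `S` is `⊥`), the law of excluded middle `S ⊔ ¬S = ⊤` holds if and only if
`S = ⊤` or `¬S = ⊤`; and `¬S = ⊤` iff `S = ⊥`. -/
theorem lqm_excluded_middle (S N : LQM H)
    (hN : IsLUB {T : LQM H | ∀ m : LQM H, IsGLB {T, S} m → m ≤ LQMbot H} N)
    (J : LQM H) (hJ : IsLUB {S, N} J) :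
    (J = LQMtop H ↔ (S = LQMtop H ∨ N = LQMtop H)) ∧
    (N = LQMtop H ↔ S = LQMbot H) := by
  classical
  have hset : {T : LQM H | ∀ m : LQM H, IsGLB {T, S} m → m ≤ LQMbot H}
      = LQMaux.negSet S := by
    ext T
    simp only [Set.mem_setOf_eq]
    exact LQMaux.mem_negset_iff S T
  rw [hset] at hN
  have part2 : N = LQMtop H ↔ S = LQMbot H := by
    constructor
    · intro hNtop
      rw [LQMaux.eq_bot_iff']
      by_contra hS
      push_neg at hS
      obtain ⟨Astar, hA⟩ := hS
      have hle : N ≤ LQMaux.negUB S := hN.2 (LQMaux.negUB_mem_upperBounds S)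
      rw [hNtop] at hle
      exact LQMaux.negUB_ne_top hA (LQMaux.top_le_iff.mp hle Astar)
    · intro hSbot
      apply le_antisymm (LQMaux.lqm_le_top N)
      apply hN.1
      intro A
      show (LQMtop H).S A * S.S A = 0
      rw [hSbot]
      show (1 : H →L[ℂ] H) * 0 = 0
      rw [one_mul]
  refine ⟨⟨?_, ?_⟩, part2⟩
  · intro hJtop
    have hle : J ≤ LQMaux.lqmJoin S N := hJ.2 (LQMaux.lqmJoin_mem_upperBounds S N)
    rw [hJtop] at hle
    have h0 := LQMaux.top_le_iff.mp hle (LQMaux.A0 (H := H))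
    have hprod : (1 - S.S (LQMaux.A0 (H := H))) * (1 - N.S (LQMaux.A0 (H := H))) = 0 :=
      sub_eq_self.mp h0
    have hp := LQMaux.central_proj_eq_zero_or_one
      (p := S.S (LQMaux.A0 (H := H)))
      (LQMaux.mem_centerAlg_iff.mp (S.mem (LQMaux.A0 (H := H)))) (S.isProj _).1
    have hq := LQMaux.central_proj_eq_zero_or_one
      (p := N.S (LQMaux.A0 (H := H)))
      (LQMaux.mem_centerAlg_iff.mp (N.mem (LQMaux.A0 (H := H)))) (N.isProj _).1
    rcases hp with hp0 | hp1
    · rcases hq with hq0 | hq1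
      · have hone : (1 : H →L[ℂ] H) = 0 := by
          rw [hp0, hq0] at hprod
          simpa using hprod
        left
        rw [LQMaux.eq_top_iff']
        intro A
        calc S.S A = S.S A * 1 := (mul_one _).symm
          _ = S.S A * 0 := by rw [hone]
          _ = 0 := mul_zero _
          _ = 1 := hone.symm
      · right
        rw [LQMaux.eq_top_iff']
        intro A
        have h : N.S (LQMaux.A0 (H := H)) * N.S A = N.S (LQMaux.A0 (H := H)) :=
          N.mono _ A (LQMaux.A0_le A)
        rw [hq1, one_mul] at h
        exact h
    · left
      rw [LQMaux.eq_top_iff']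
      intro A
      have h : S.S (LQMaux.A0 (H := H)) * S.S A = S.S (LQMaux.A0 (H := H)) :=
        S.mono _ A (LQMaux.A0_le A)
      rw [hp1, one_mul] at h
      exact h
  · rintro (h | h)
    · apply le_antisymm (LQMaux.lqm_le_top J)
      rw [← h]
      exact hJ.1 (by simp)
    · apply le_antisymm (LQMaux.lqm_le_top J)
      rw [← h]
      exact hJ.1 (by simp)
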